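/- The G-sets X̄ and Ȳ are isomorphic as B-sets, i.e. there is a B-equivariant bijection X̄ → Ȳ. -/

import Mathlib

open Matrix CategoryTheory CategoryTheory.Limits Pointwise
open scoped LinearAlgebra.Projectivization

noncomputable section

/-- The projective line over a field `K`, as the projectivization of `K²`. -/
abbrev P1 (K : Type*) [Field K] := ℙ K (Fin 2 → K)

namespace P1

variable {K : Type*} [Field K]

lemma mulVec_ne_zero (g : GL (Fin 2) K) {v : Fin 2 → K} (hv : v ≠ 0) :
    (g : Matrix (Fin 2) (Fin 2) K) *ᵥ v ≠ 0 := by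
  intro h
  apply hv
  have h2 := congrArg (fun w => ((g⁻¹ : GL (Fin 2) K) : Matrix (Fin 2) (Fin 2) K) *ᵥ w) h
  simp only [Matrix.mulVec_mulVec] at h2
  rw [Units.inv_mul, Matrix.one_mulVec, Matrix.mulVec_zero] at h2
  exact h2

/-- The natural action of `GL₂(K)` on the projective line `ℙ¹(K)`. -/
instance : SMul (GL (Fin 2) K) (P1 K) :=
  ⟨fun g x => Projectivization.mk K ((g : Matrix (Fin 2) (Fin 2) K) *ᵥ x.rep)
    (mulVec_ne_zero g x.rep_nonzero)⟩

lemma smul_mk (g : GL (Fin 2) K) (v : Fin 2 → K) (hv : v ≠ 0) :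
    g • Projectivization.mk K v hv
      = Projectivization.mk K ((g : Matrix (Fin 2) (Fin 2) K) *ᵥ v) (mulVec_ne_zero g hv) := by
  show Projectivization.mk K _ _ = _
  rw [Projectivization.mk_eq_mk_iff]
  obtain ⟨a, ha⟩ := Projectivization.exists_smul_eq_mk_rep K v hv
  exact ⟨a, by rw [← ha]; simp [Matrix.mulVec_smul]⟩

instance : MulAction (GL (Fin 2) K) (P1 K) where
  one_smul x := by
    induction x using Projectivization.ind with
    | h v hv => rw [smul_mk]; simp
  mul_smul g h x := by
    induction x using Projectivization.ind with
    | h v hv =>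
      rw [smul_mk, smul_mk, smul_mk, Projectivization.mk_eq_mk_iff]
      exact ⟨1, by simp only [one_smul, Units.val_mul, Matrix.mulVec_mulVec]⟩

end P1

section Setup

variable (F : Type*) [Field F] (F' : Type*) [Field F'] [Algebra F F']

/-- The inclusion `GL₂(F) → GL₂(F')` induced by the inclusion `F ⊆ F'`. -/
def glMap : GL (Fin 2) F →* GL (Fin 2) F' :=
  Matrix.GeneralLinearGroup.map (algebraMap F F')

/-- The scalar matrices, as a homomorphism `Fˣ →* GL₂(F)`. -/
def scalarGL : Fˣ →* GL (Fin 2) F :=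
  Units.map (Matrix.scalar (Fin 2)).toMonoidHom

variable {F F'}

/-- The (semilinear) action of a field automorphism `σ ∈ Gal(F'/F)` on `ℙ¹(F')`. -/
def sigmaPt (σ : F' ≃ₐ[F] F') (x : P1 F') : P1 F' :=
  Projectivization.mk F' (fun i => σ (x.rep i))
    (fun h => x.rep_nonzero (funext fun i => σ.injective (by simpa using congrFun h i)))

variable (F F')

/-- The set of `F`-rational points `ℙ¹(F) ⊆ ℙ¹(F')`. -/
def ratPts : Set (P1 F') :=
  Set.range (fun x : P1 F =>
    Projectivization.mk F' (fun i => algebraMap F F' (x.rep i))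
      (fun h => x.rep_nonzero (funext fun i =>
        (algebraMap F F').injective (by simpa using congrFun h i))))

/-- A Borel subgroup of `GL₂(F)`: the stabilizer of a point `∞ ∈ ℙ¹(F)`. -/
def Bsub (xoo : P1 F) : Subgroup (GL (Fin 2) F) :=
  MulAction.stabilizer (GL (Fin 2) F) xoo

/-- A split maximal torus of `GL₂(F)`: the pointwise stabilizer of `{0, ∞} ⊆ ℙ¹(F)`. -/
def Tsub (x0 xoo : P1 F) : Subgroup (GL (Fin 2) F) :=
  MulAction.stabilizer (GL (Fin 2) F) x0 ⊓ MulAction.stabilizer (GL (Fin 2) F) xoo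

/-- The setwise stabilizer of `{0, ∞} ⊆ ℙ¹(F)` in `GL₂(F)`. -/
def Nsub (x0 xoo : P1 F) : Subgroup (GL (Fin 2) F) :=
  MulAction.stabilizer (GL (Fin 2) F) ({x0, xoo} : Set (P1 F))

/-- A nonsplit maximal torus of `GL₂(F)`: the stabilizer in `GL₂(F)` of a point
`P ∈ ℙ¹(F') ∖ ℙ¹(F)`. -/
def T'sub (P : P1 F') : Subgroup (GL (Fin 2) F) :=
  (MulAction.stabilizer (GL (Fin 2) F') P).comap (glMap F F')

/-- The setwise stabilizer in `GL₂(F)` of the pair `{P, σP}`, for `P ∈ ℙ¹(F') ∖ ℙ¹(F)`. -/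
def N'sub (σ : F' ≃ₐ[F] F') (P : P1 F') : Subgroup (GL (Fin 2) F) :=
  (MulAction.stabilizer (GL (Fin 2) F') ({P, sigmaPt σ P} : Set (P1 F'))).comap (glMap F F')

end Setup

section Bar

variable {F : Type*} [Field F] {F' : Type*} [Field F'] [Algebra F F']

lemma sigmaPt_mk (σ : F' ≃ₐ[F] F') (v : Fin 2 → F') (hv : v ≠ 0) :
    sigmaPt σ (Projectivization.mk F' v hv)
      = Projectivization.mk F' (fun i => σ (v i))
          (fun h => hv (funext fun i => σ.injective (by simpa using congrFun h i))) := by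
  unfold sigmaPt
  rw [Projectivization.mk_eq_mk_iff]
  obtain ⟨a, ha⟩ := Projectivization.exists_smul_eq_mk_rep F' v hv
  refine ⟨Units.map (σ : F' →* F') a, funext fun i => ?_⟩
  rw [← ha]
  simp [Units.smul_def]

lemma glMap_coe_apply (g : GL (Fin 2) F) (i j : Fin 2) :
    (glMap F F' g : Matrix (Fin 2) (Fin 2) F') i j
      = algebraMap F F' ((g : Matrix (Fin 2) (Fin 2) F) i j) := rfl

lemma glMap_mulVec_sigma (σ : F' ≃ₐ[F] F') (g : GL (Fin 2) F) (v : Fin 2 → F') :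
    ((glMap F F' g : Matrix (Fin 2) (Fin 2) F') *ᵥ fun i => σ (v i))
      = fun i => σ (((glMap F F' g : Matrix (Fin 2) (Fin 2) F') *ᵥ v) i) := by
  funext i
  simp only [Matrix.mulVec, dotProduct, map_sum]
  refine Finset.sum_congr rfl fun j _ => ?_
  rw [_root_.map_mul, glMap_coe_apply, AlgEquiv.commutes]

lemma sigmaPt_glSmul (σ : F' ≃ₐ[F] F') (g : GL (Fin 2) F) (x : P1 F') :
    sigmaPt σ (glMap F F' g • x) = glMap F F' g • sigmaPt σ x := by
  induction x using Projectivization.ind with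
  | h v hv =>
    rw [P1.smul_mk, sigmaPt_mk, sigmaPt_mk, P1.smul_mk]
    rw [Projectivization.mk_eq_mk_iff]
    exact ⟨1, by simp [glMap_mulVec_sigma σ g v]⟩

end Bar

/-- The `G`-set `X̄`: unordered pairs of distinct points of `ℙ¹(F)`, plus one added point. -/
def XbarSet (F : Type*) [Field F] := {z : Sym2 (P1 F) // ¬ z.IsDiag} ⊕ Unit

/-- The action of `GL₂(F)` on `X̄`. -/
def actXbar {F : Type*} [Field F] (g : GL (Fin 2) F) : XbarSet F → XbarSet F
  | Sum.inl z => Sum.inl ⟨Sym2.map (g • ·) z.1, by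
      obtain ⟨w, hw⟩ := z
      induction w using Sym2.ind with
      | _ a b =>
        simpa [Sym2.map_pair_eq, Sym2.mk_isDiag_iff,
          (MulAction.injective g).eq_iff] using hw⟩
  | Sum.inr u => Sum.inr u

/-- The `G`-set `Ȳ = ℙ¹(F')/⟨σ⟩`: the quotient of `ℙ¹(F')` by the action of `σ`. -/
def YbarSet {F : Type*} [Field F] {F' : Type*} [Field F'] [Algebra F F']
    (σ : F' ≃ₐ[F] F') := Quot (fun x y : P1 F' => sigmaPt σ x = y)

/-- The action of `GL₂(F)` on `Ȳ`. -/
def actYbar {F : Type*} [Field F] {F' : Type*} [Field F'] [Algebra F F']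
    (σ : F' ≃ₐ[F] F') (g : GL (Fin 2) F) : YbarSet σ → YbarSet σ :=
  Quot.map (fun y => glMap F F' g • y)
    (fun a b hab => by rw [← hab]; exact sigmaPt_glSmul σ g a)

namespace S7

open scoped Classical

variable {K : Type*} [Field K]

lemma vne (w : K) : (![w, 1] : Fin 2 → K) ≠ 0 := by
  intro h; have := congrFun h 1; simp at this

lemma vne' : (![(1:K), 0] : Fin 2 → K) ≠ 0 := by
  intro h; have := congrFun h 0; simp at this

/-- The affine point `[w : 1]`. -/
def pt (w : K) : P1 K := Projectivization.mk K ![w, 1] (vne w)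

/-- The point at infinity `[1 : 0]`. -/
def inf (K : Type*) [Field K] : P1 K := Projectivization.mk K ![1, 0] vne'

lemma pt_injective {x y : K} (h : pt x = pt y) : x = y := by
  rw [pt, pt, Projectivization.mk_eq_mk_iff] at h
  obtain ⟨a, ha⟩ := h
  have h0 := congrFun ha 0
  have h1 := congrFun ha 1
  simp [Units.smul_def] at h0 h1
  rw [h1] at h0; simpa using h0.symm

lemma pt_ne_inf (w : K) : pt w ≠ inf K := by
  intro h
  rw [pt, inf, Projectivization.mk_eq_mk_iff] at h
  obtain ⟨a, ha⟩ := h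
  have h1 := congrFun ha 1
  simp [Units.smul_def] at h1

/-- The affine coordinate of a point. -/
def coord (x : P1 K) : K := x.rep 0 / x.rep 1

lemma eq_pt_coord {x : P1 K} (h : x ≠ inf K) : x = pt (coord x) := by
  have hrep : x = Projectivization.mk K x.rep x.rep_nonzero := (Projectivization.mk_rep x).symm
  have h1 : x.rep 1 ≠ 0 := by
    intro h1
    apply h
    have h0 : x.rep 0 ≠ 0 := by
      intro h0; apply x.rep_nonzero; funext i; fin_cases i <;> assumption
    rw [hrep, inf]
    rw [Projectivization.mk_eq_mk_iff]
    exact ⟨Units.mk0 (x.rep 0) h0, by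
      funext i; fin_cases i <;> simp [Units.smul_def, h1]⟩
  rw [pt, coord]
  nth_rewrite 1 [hrep]
  rw [Projectivization.mk_eq_mk_iff]
  exact ⟨Units.mk0 (x.rep 1) h1, by
    funext i; fin_cases i <;> simp [Units.smul_def] <;> field_simp⟩

lemma coord_pt (w : K) : coord (pt w) = w :=
  pt_injective ((eq_pt_coord (pt_ne_inf w)).symm)

lemma mulVec_two (M : Matrix (Fin 2) (Fin 2) K) (v : Fin 2 → K) :
    M *ᵥ v = ![M 0 0 * v 0 + M 0 1 * v 1, M 1 0 * v 0 + M 1 1 * v 1] := by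
  funext i
  fin_cases i <;> simp [Matrix.mulVec, dotProduct, Fin.sum_univ_two]

lemma smul_pt (g : GL (Fin 2) K) (hg : (g : Matrix (Fin 2) (Fin 2) K) 1 0 = 0)
    (hd : (g : Matrix (Fin 2) (Fin 2) K) 1 1 ≠ 0) (w : K) :
    g • pt w = pt (((g : Matrix (Fin 2) (Fin 2) K) 0 0 * w
      + (g : Matrix (Fin 2) (Fin 2) K) 0 1) / (g : Matrix (Fin 2) (Fin 2) K) 1 1) := by
  rw [pt, pt, P1.smul_mk, Projectivization.mk_eq_mk_iff, mulVec_two]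
  refine ⟨Units.mk0 _ hd, ?_⟩
  funext i
  fin_cases i <;> simp [Units.smul_def, hg] <;> field_simp

lemma smul_inf (g : GL (Fin 2) K) (hg : (g : Matrix (Fin 2) (Fin 2) K) 1 0 = 0)
    (ha : (g : Matrix (Fin 2) (Fin 2) K) 0 0 ≠ 0) :
    g • inf K = inf K := by
  rw [inf, P1.smul_mk, Projectivization.mk_eq_mk_iff, mulVec_two]
  refine ⟨Units.mk0 _ ha, ?_⟩
  funext i
  fin_cases i <;> simp [Units.smul_def, hg]

lemma det_ne_zero (g : GL (Fin 2) K) : (g : Matrix (Fin 2) (Fin 2) K).det ≠ 0 := by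
  have : IsUnit (g : Matrix (Fin 2) (Fin 2) K) := ⟨g, rfl⟩
  exact ((Matrix.isUnit_iff_isUnit_det _).mp this).ne_zero

lemma stab_entries {g : GL (Fin 2) K} (hg : g • inf K = inf K) :
    (g : Matrix (Fin 2) (Fin 2) K) 1 0 = 0 ∧ (g : Matrix (Fin 2) (Fin 2) K) 0 0 ≠ 0 ∧
      (g : Matrix (Fin 2) (Fin 2) K) 1 1 ≠ 0 := by
  rw [inf, P1.smul_mk, Projectivization.mk_eq_mk_iff, mulVec_two] at hg
  obtain ⟨a, ha⟩ := hg
  have h0 := congrFun ha 0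
  have h1 := congrFun ha 1
  simp [Units.smul_def] at h0 h1
  have h10 : (g : Matrix (Fin 2) (Fin 2) K) 1 0 = 0 := by simpa using h1.symm
  have h00 : (g : Matrix (Fin 2) (Fin 2) K) 0 0 ≠ 0 := by
    rw [← h0]; simpa using a.ne_zero
  refine ⟨h10, h00, ?_⟩
  intro h11
  apply det_ne_zero g
  rw [Matrix.det_fin_two, h10, h11]
  ring

lemma exists_transitive (x : P1 K) : ∃ g : GL (Fin 2) K, g • inf K = x := by
  have hrep : x = Projectivization.mk K x.rep x.rep_nonzero := (Projectivization.mk_rep x).symm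
  by_cases h1 : x.rep 1 = 0
  · have h0 : x.rep 0 ≠ 0 := by
      intro h0; apply x.rep_nonzero; funext i; fin_cases i <;> assumption
    have hdet : (!![x.rep 0, 0; 0, 1] : Matrix (Fin 2) (Fin 2) K).det ≠ 0 := by
      rw [Matrix.det_fin_two]; simpa using h0
    refine ⟨Matrix.GeneralLinearGroup.mkOfDetNeZero _ hdet, ?_⟩
    conv_rhs => rw [hrep]
    rw [inf, P1.smul_mk, Projectivization.mk_eq_mk_iff]
    refine ⟨1, ?_⟩
    funext i
    have : (Matrix.GeneralLinearGroup.mkOfDetNeZero _ hdet :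
      Matrix (Fin 2) (Fin 2) K) = !![x.rep 0, 0; 0, 1] := rfl
    rw [this, mulVec_two]
    fin_cases i <;> simp [Units.smul_def, h1]
  · have hdet : (!![x.rep 0, 1; x.rep 1, 0] : Matrix (Fin 2) (Fin 2) K).det ≠ 0 := by
      rw [Matrix.det_fin_two]; simpa using h1
    refine ⟨Matrix.GeneralLinearGroup.mkOfDetNeZero _ hdet, ?_⟩
    conv_rhs => rw [hrep]
    rw [inf, P1.smul_mk, Projectivization.mk_eq_mk_iff]
    refine ⟨1, ?_⟩
    funext i
    have : (Matrix.GeneralLinearGroup.mkOfDetNeZero _ hdet :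
      Matrix (Fin 2) (Fin 2) K) = !![x.rep 0, 1; x.rep 1, 0] := rfl
    rw [this, mulVec_two]
    fin_cases i <;> simp [Units.smul_def]

end S7
namespace S7

variable {F : Type*} [Field F] {F' : Type*} [Field F'] [Algebra F F']

lemma sigmaPt_pt (σ : F' ≃ₐ[F] F') (z : F') : sigmaPt σ (pt z) = pt (σ z) := by
  rw [pt, sigmaPt_mk, pt, Projectivization.mk_eq_mk_iff]
  refine ⟨1, ?_⟩
  funext i; fin_cases i <;> simp

lemma sigmaPt_inf (σ : F' ≃ₐ[F] F') : sigmaPt σ (inf F') = inf F' := by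
  rw [inf, sigmaPt_mk, Projectivization.mk_eq_mk_iff]
  refine ⟨1, ?_⟩
  funext i; fin_cases i <;> simp

lemma alg_inj : Function.Injective (algebraMap F F') :=
  (algebraMap F F').injective

/-- every element is `a + b·δ` for `δ` irrational. -/
lemma gen (hdim : Module.finrank F F' = 2) {δ : F'}
    (hδ : δ ∉ Set.range (algebraMap F F')) (z : F') :
    ∃ ab : F × F, z = algebraMap F F' ab.1 + algebraMap F F' ab.2 * δ := by
  have hind : LinearIndependent F ![(1 : F'), δ] := by
    rw [LinearIndependent.pair_iff]
    intro a b hab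
    rw [Algebra.smul_def, Algebra.smul_def, mul_one] at hab
    by_cases hb : b = 0
    · subst hb
      simp only [_root_.map_zero, zero_mul, add_zero] at hab
      refine ⟨by simpa using alg_inj (hab.trans (_root_.map_zero _).symm), rfl⟩
    · exfalso
      apply hδ
      refine ⟨-a / b, ?_⟩
      have hb' : algebraMap F F' b ≠ 0 := by
        simpa [map_eq_zero_iff _ alg_inj] using hb
      rw [_root_.map_div₀, _root_.map_neg, div_eq_iff hb']
      linear_combination -hab
  have hcard : Fintype.card (Fin 2) = Module.finrank F F' := by simp [hdim]
  set B := basisOfLinearIndependentOfCardEqFinrank hind hcard with hB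
  have hB0 : B 0 = 1 := by rw [hB, coe_basisOfLinearIndependentOfCardEqFinrank]; rfl
  have hB1 : B 1 = δ := by rw [hB, coe_basisOfLinearIndependentOfCardEqFinrank]; rfl
  refine ⟨(B.repr z 0, B.repr z 1), ?_⟩
  have := B.sum_repr z
  rw [Fin.sum_univ_two, hB0, hB1, Algebra.smul_def, Algebra.smul_def, mul_one] at this
  exact this.symm

lemma uniq {δ : F'} (hδ : δ ∉ Set.range (algebraMap F F')) {a b a' b' : F}
    (h : algebraMap F F' a + algebraMap F F' b * δ
      = algebraMap F F' a' + algebraMap F F' b' * δ) : a = a' ∧ b = b' := by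
  by_cases hb : b = b'
  · subst hb
    refine ⟨alg_inj (by linear_combination h), rfl⟩
  · exfalso
    apply hδ
    refine ⟨(a - a') / (b' - b), ?_⟩
    have hbb : algebraMap F F' b' - algebraMap F F' b ≠ 0 := by
      rw [← _root_.map_sub]
      simp only [ne_eq, map_eq_zero_iff _ alg_inj, sub_eq_zero]
      exact fun hc => hb hc.symm
    rw [_root_.map_div₀, _root_.map_sub, _root_.map_sub, div_eq_iff hbb]
    linear_combination h

lemma exists_nonrat (hdim : Module.finrank F F' = 2) :
    ∃ δ : F', δ ∉ Set.range (algebraMap F F') := by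
  by_contra h
  push_neg at h
  have hbot : (⊥ : Subalgebra F F') = ⊤ := by
    rw [eq_top_iff]
    intro z _
    rw [Algebra.mem_bot]
    exact h z
  have := Subalgebra.bot_eq_top_iff_finrank_eq_one.mp hbot
  rw [hdim] at this
  exact (by norm_num : (2 : ℕ) ≠ 1) this

lemma sigma_fix (σ : F' ≃ₐ[F] F') (a : F) : σ (algebraMap F F' a) = algebraMap F F' a :=
  σ.commutes a

lemma sigma_ne_self (hdim : Module.finrank F F' = 2) {σ : F' ≃ₐ[F] F'}
    (hσ : σ ≠ (AlgEquiv.refl : F' ≃ₐ[F] F')) {x : F'}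
    (hx : x ∉ Set.range (algebraMap F F')) : σ x ≠ x := by
  intro hfix
  apply hσ
  ext z
  obtain ⟨⟨a, b⟩, hab⟩ := gen hdim hx z
  rw [hab, _root_.map_add, _root_.map_mul, sigma_fix, hfix]
  simp

lemma sigma_nonrat {σ : F' ≃ₐ[F] F'} {x : F'}
    (hx : x ∉ Set.range (algebraMap F F')) : σ x ∉ Set.range (algebraMap F F') := by
  rintro ⟨c, hc⟩
  exact hx ⟨c, σ.injective ((sigma_fix σ c).trans hc)⟩

lemma exists_delta (hdim : Module.finrank F F' = 2) {σ : F' ≃ₐ[F] F'}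
    (hσ : σ ≠ (AlgEquiv.refl : F' ≃ₐ[F] F')) :
    ∃ (δ : F') (s : F), δ ∉ Set.range (algebraMap F F') ∧ s ≠ 0 ∧
      σ δ = algebraMap F F' s - δ := by
  obtain ⟨δ₀, hδ₀⟩ := exists_nonrat hdim
  obtain ⟨⟨p, q⟩, hpq⟩ := gen hdim hδ₀ (σ δ₀)
  dsimp only at hpq
  have hq0 : q ≠ 0 := by
    intro h
    subst h
    apply sigma_nonrat hδ₀
    rw [hpq]
    exact ⟨p, by simp⟩
  by_cases hq1 : q = 1
  · -- characteristic 2 case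
    subst hq1
    rw [_root_.map_one, one_mul] at hpq
    have hp0 : p ≠ 0 := by
      intro h
      subst h
      exact sigma_ne_self hdim hσ hδ₀ (by rw [hpq]; simp)
    obtain ⟨⟨m, t⟩, hmt⟩ := gen hdim hδ₀ (δ₀ * δ₀)
    dsimp only at hmt
    have e1 : σ (δ₀ * δ₀) = algebraMap F F' (m + t * p) + algebraMap F F' t * δ₀ := by
      rw [hmt, _root_.map_add, _root_.map_mul, sigma_fix, sigma_fix, hpq]
      simp only [_root_.map_add, _root_.map_mul]
      ring
    have e2 : σ (δ₀ * δ₀) = algebraMap F F' (p * p + m) + algebraMap F F' (2 * p + t) * δ₀ := by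
      rw [_root_.map_mul, hpq]
      simp only [_root_.map_add, _root_.map_mul, _root_.map_ofNat]
      linear_combination hmt
    have huv := uniq hδ₀ (e1.symm.trans e2)
    have h2p : 2 * p = 0 := by linear_combination -huv.2
    have h2 : (2 : F) = 0 := by
      rcases mul_eq_zero.mp h2p with h | h
      · exact h
      · exact absurd h hp0
    have h2' : (2 : F') = 0 := by
      rw [← _root_.map_ofNat (algebraMap F F') 2, h2, _root_.map_zero]
    refine ⟨δ₀, p, hδ₀, hp0, ?_⟩
    rw [hpq]
    linear_combination δ₀ * h2'
  · -- q ≠ 1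
    have hq1' : q - 1 ≠ 0 := sub_ne_zero.mpr hq1
    set c : F := p / (q - 1) with hc_def
    set x : F' := δ₀ + algebraMap F F' c with hx_def
    have hx : x ∉ Set.range (algebraMap F F') := by
      rintro ⟨d, hd⟩
      exact hδ₀ ⟨d - c, by rw [_root_.map_sub]; linear_combination hd⟩
    have hσx : σ x = algebraMap F F' q * x := by
      have hc : p + c = q * c := by
        rw [hc_def]
        field_simp
        ring
      have hc' := congrArg (algebraMap F F') hc
      rw [_root_.map_add, _root_.map_mul] at hc'
      have hσx0 : σ x = algebraMap F F' p + algebraMap F F' q * δ₀ + algebraMap F F' c := by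
        rw [hx_def, _root_.map_add, sigma_fix, hpq]
      rw [hσx0, hx_def]
      linear_combination hc'
    obtain ⟨⟨m, t⟩, hmt⟩ := gen hdim hx (x * x)
    dsimp only at hmt
    have f1 : σ (x * x) = algebraMap F F' m + algebraMap F F' (t * q) * x := by
      rw [hmt, _root_.map_add, _root_.map_mul, sigma_fix, sigma_fix, hσx]
      simp only [_root_.map_mul]
      ring
    have f2 : σ (x * x) = algebraMap F F' (q * q * m) + algebraMap F F' (q * q * t) * x := by
      rw [_root_.map_mul, hσx]
      simp only [_root_.map_mul]
      linear_combination (algebraMap F F' q * algebraMap F F' q) * hmt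
    have huv := uniq hx (f1.symm.trans f2)
    have hx0 : x ≠ 0 := by
      intro h
      exact hx ⟨0, by rw [_root_.map_zero, h]⟩
    have ht : t = 0 := by
      have h3 : t * (q * (q - 1)) = 0 := by linear_combination -huv.2
      rcases mul_eq_zero.mp h3 with h | h
      · exact h
      · rcases mul_eq_zero.mp h with h' | h'
        · exact absurd h' hq0
        · exact absurd h' hq1'
    have hm0 : m ≠ 0 := by
      intro h
      apply hx0
      have : x * x = 0 := by rw [hmt, h, ht]; simp
      exact (mul_self_eq_zero).mp this
    have hq2 : q * q = 1 := by
      have h4 : m * (q * q - 1) = 0 := by linear_combination -huv.1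
      rcases mul_eq_zero.mp h4 with h | h
      · exact absurd h hm0
      · linear_combination h
    have hqm1 : q = -1 := by
      have h5 : (q - 1) * (q + 1) = 0 := by linear_combination hq2
      rcases mul_eq_zero.mp h5 with h | h
      · exact absurd h hq1'
      · linear_combination h
    have hσx' : σ x = -x := by
      rw [hσx, hqm1]
      simp
    by_cases h2 : (2 : F) = 0
    · exfalso
      apply hq1
      rw [hqm1]
      linear_combination -h2
    · refine ⟨x + 1, 2, ?_, h2, ?_⟩
      · rintro ⟨d, hd⟩
        exact hx ⟨d - 1, by rw [_root_.map_sub, _root_.map_one]; linear_combination hd⟩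
      · rw [_root_.map_add, hσx', _root_.map_one, _root_.map_ofNat]
        ring

end S7
namespace S7

open scoped Classical

variable {F : Type*} [Field F] {F' : Type*} [Field F'] [Algebra F F']

section Maps

variable (σ : F' ≃ₐ[F] F') (δ : F') (s : F)

lemma sigma_comb (hσδ : σ δ = algebraMap F F' s - δ) (u v : F) :
    σ (algebraMap F F' u + algebraMap F F' v * δ)
      = algebraMap F F' (u + v * s) + algebraMap F F' (-v) * δ := by
  rw [_root_.map_add, _root_.map_mul, sigma_fix, sigma_fix, hσδ]
  simp only [_root_.map_add, _root_.map_mul, _root_.map_neg]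
  ring

/-- The map sending an unordered pair `{x, y}` of affine points to the class of the
point `x + ((y-x)/s)·δ` in `ℙ¹(F')/⟨σ⟩`. -/
def jmap (x y : F) : YbarSet σ :=
  Quot.mk _ (pt (algebraMap F F' x + algebraMap F F' ((y - x) / s) * δ))

lemma jmap_symm (hs : s ≠ 0) (hσδ : σ δ = algebraMap F F' s - δ) (x y : F) :
    jmap σ δ s x y = jmap σ δ s y x := by
  apply Quot.sound
  show sigmaPt σ _ = _
  have key : σ (algebraMap F F' x + algebraMap F F' ((y - x) / s) * δ)
      = algebraMap F F' y + algebraMap F F' ((x - y) / s) * δ := by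
    rw [sigma_comb σ δ s hσδ]
    have h1 : x + (y - x) / s * s = y := by field_simp; ring
    have h2 : -((y - x) / s) = (x - y) / s := by ring
    rw [h1, h2]
  rw [sigmaPt_pt, key]

/-- Auxiliary two-variable version of the forward map. -/
def hmap (x y : P1 F) : YbarSet σ :=
  if x = inf F then
    (if y = inf F then Quot.mk _ (inf F')
     else Quot.mk _ (pt (algebraMap F F' (coord y))))
  else if y = inf F then Quot.mk _ (pt (algebraMap F F' (coord x)))
  else jmap σ δ s (coord x) (coord y)

lemma hmap_inf_inf : hmap σ δ s (inf F) (inf F) = Quot.mk _ (inf F') := by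
  simp [hmap]
  rfl

lemma hmap_inf_pt (w : F) :
    hmap σ δ s (inf F) (pt w) = Quot.mk _ (pt (algebraMap F F' w)) := by
  simp [hmap, pt_ne_inf, coord_pt]
  rfl

lemma hmap_pt_inf (w : F) :
    hmap σ δ s (pt w) (inf F) = Quot.mk _ (pt (algebraMap F F' w)) := by
  simp [hmap, pt_ne_inf, coord_pt]
  rfl

lemma hmap_pt_pt (w₁ w₂ : F) :
    hmap σ δ s (pt w₁) (pt w₂) = jmap σ δ s w₁ w₂ := by
  simp [hmap, pt_ne_inf, coord_pt]

lemma hmap_symm (hs : s ≠ 0) (hσδ : σ δ = algebraMap F F' s - δ) (x y : P1 F) :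
    hmap σ δ s x y = hmap σ δ s y x := by
  by_cases hx : x = inf F <;> by_cases hy : y = inf F
  · rw [hx, hy]
  · rw [hx, eq_pt_coord hy, hmap_inf_pt, hmap_pt_inf]
  · rw [hy, eq_pt_coord hx, hmap_inf_pt, hmap_pt_inf]
  · rw [eq_pt_coord hx, eq_pt_coord hy, hmap_pt_pt, hmap_pt_pt]
    exact jmap_symm σ δ s hs hσδ _ _

/-- The forward map `X̄ → Ȳ`. -/
def fwd (hs : s ≠ 0) (hσδ : σ δ = algebraMap F F' s - δ) : XbarSet F → YbarSet σ :=
  Sum.elim (fun z => Sym2.lift ⟨hmap σ δ s, hmap_symm σ δ s hs hσδ⟩ z.1)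
    (fun _ => Quot.mk _ (inf F'))

/-- Coordinates of `z ∈ F'` with respect to the basis `1, δ`. -/
def co (hdim : Module.finrank F F' = 2) {δ : F'}
    (hδ : δ ∉ Set.range (algebraMap F F')) (z : F') : F × F :=
  Classical.choose (gen hdim hδ z)

lemma co_spec (hdim : Module.finrank F F' = 2) {δ : F'}
    (hδ : δ ∉ Set.range (algebraMap F F')) (z : F') :
    z = algebraMap F F' (co hdim hδ z).1 + algebraMap F F' (co hdim hδ z).2 * δ :=
  Classical.choose_spec (gen hdim hδ z)

lemma co_eq (hdim : Module.finrank F F' = 2) {δ : F'}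
    (hδ : δ ∉ Set.range (algebraMap F F')) {z : F'} {u v : F}
    (h : z = algebraMap F F' u + algebraMap F F' v * δ) : co hdim hδ z = (u, v) := by
  have h2 := uniq hδ ((co_spec hdim hδ z).symm.trans h)
  exact Prod.ext h2.1 h2.2

variable (hdim : Module.finrank F F' = 2) (hδ : δ ∉ Set.range (algebraMap F F'))

/-- The backward map `ℙ¹(F') → X̄`. -/
def bwdP (hs : s ≠ 0) : P1 F' → XbarSet F := fun y =>
  if y = inf F' then Sum.inr ()
  else if hv : (co hdim hδ (coord y)).2 = 0 then
    Sum.inl ⟨s(inf F, pt (co hdim hδ (coord y)).1), by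
      rw [Sym2.mk_isDiag_iff]
      exact fun h => (pt_ne_inf _) h.symm⟩
  else
    Sum.inl ⟨s(pt (co hdim hδ (coord y)).1,
        pt ((co hdim hδ (coord y)).1 + (co hdim hδ (coord y)).2 * s)), by
      rw [Sym2.mk_isDiag_iff]
      intro h
      have := pt_injective h
      exact hv (by
        have hvs : (co hdim hδ (coord y)).2 * s = 0 := by linear_combination -this
        rcases mul_eq_zero.mp hvs with h' | h'
        · exact h'
        · exact absurd h' hs)⟩

lemma bwdP_inf (hs : s ≠ 0) : bwdP δ s hdim hδ hs (inf F') = Sum.inr () := by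
  rw [bwdP]; exact if_pos rfl

lemma bwdP_pt_rat (hs : s ≠ 0) (u : F) (hpf : ¬(s(inf F, pt u) : Sym2 (P1 F)).IsDiag) :
    bwdP δ s hdim hδ hs (pt (algebraMap F F' u)) = Sum.inl ⟨s(inf F, pt u), hpf⟩ := by
  have hco : co hdim hδ (coord (pt (algebraMap F F' u))) = (u, 0) := by
    rw [coord_pt]
    exact co_eq hdim hδ (by simp)
  erw [bwdP, if_neg (pt_ne_inf _), dif_pos (by rw [hco])]
  congr 1
  apply Subtype.ext
  dsimp only
  rw [hco]

lemma bwdP_pt_irr (hs : s ≠ 0) (u v : F) (hv : v ≠ 0)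
    (hpf : ¬(s(pt u, pt (u + v * s)) : Sym2 (P1 F)).IsDiag) :
    bwdP δ s hdim hδ hs (pt (algebraMap F F' u + algebraMap F F' v * δ))
      = Sum.inl ⟨s(pt u, pt (u + v * s)), hpf⟩ := by
  have hco : co hdim hδ (coord (pt (algebraMap F F' u + algebraMap F F' v * δ)))
      = (u, v) := by
    rw [coord_pt]
    exact co_eq hdim hδ rfl
  erw [bwdP, if_neg (pt_ne_inf _), dif_neg (by rw [hco]; exact hv)]
  congr 1
  apply Subtype.ext
  dsimp only
  rw [hco]

lemma pair_ne_rat (u : F) : ¬(s(inf F, pt u) : Sym2 (P1 F)).IsDiag := by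
  rw [Sym2.mk_isDiag_iff]
  exact fun h => (pt_ne_inf _) h.symm

lemma pair_ne (hs : s ≠ 0) {v : F} (hv : v ≠ 0) (u : F) :
    ¬(s(pt u, pt (u + v * s)) : Sym2 (P1 F)).IsDiag := by
  rw [Sym2.mk_isDiag_iff]
  intro h
  have h2 := pt_injective h
  have hvs : v * s = 0 := by linear_combination -h2
  rcases mul_eq_zero.mp hvs with h' | h'
  exacts [hv h', hs h']

lemma bwdP_sigma (hs : s ≠ 0) (hσδ : σ δ = algebraMap F F' s - δ) (a : P1 F') :
    bwdP δ s hdim hδ hs a = bwdP δ s hdim hδ hs (sigmaPt σ a) := by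
  by_cases ha : a = inf F'
  · rw [ha, sigmaPt_inf]
  · have haz : a = pt (coord a) := eq_pt_coord ha
    rw [haz, sigmaPt_pt]
    generalize coord a = z
    obtain ⟨⟨u, v⟩, hz⟩ := gen hdim hδ z
    dsimp only at hz
    subst hz
    rw [sigma_comb σ δ s hσδ]
    by_cases hv : v = 0
    · have e1 : algebraMap F F' u + algebraMap F F' (0 : F) * δ = algebraMap F F' u := by
        simp
      have e2 : algebraMap F F' (u + 0 * s) + algebraMap F F' (-(0 : F)) * δ
          = algebraMap F F' u := by simp
      rw [hv, e1, e2]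
    · rw [bwdP_pt_irr δ s hdim hδ hs u v hv (pair_ne s hs hv u),
        bwdP_pt_irr δ s hdim hδ hs (u + v * s) (-v) (neg_ne_zero.mpr hv)
          (pair_ne s hs (neg_ne_zero.mpr hv) (u + v * s))]
      refine congrArg Sum.inl (Subtype.ext ?_)
      dsimp only
      have e : u + v * s + -v * s = u := by ring
      rw [e]
      exact Sym2.eq_swap

/-- The backward map `Ȳ → X̄`. -/
def bwd (hs : s ≠ 0) (hσδ : σ δ = algebraMap F F' s - δ) : YbarSet σ → XbarSet F :=
  Quot.lift (bwdP δ s hdim hδ hs)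
    (fun a b hab => by rw [← hab]; exact bwdP_sigma σ δ s hdim hδ hs hσδ a)

end Maps

end S7
namespace S7

variable {F : Type*} [Field F] {F' : Type*} [Field F'] [Algebra F F']

section Inv

variable (σ : F' ≃ₐ[F] F') (δ : F') (s : F)
variable (hdim : Module.finrank F F' = 2) (hδ : δ ∉ Set.range (algebraMap F F'))
variable (hs : s ≠ 0) (hσδ : σ δ = algebraMap F F' s - δ)

lemma left_inv_aux (x : XbarSet F) :
    bwd σ δ s hdim hδ hs hσδ (fwd σ δ s hs hσδ x) = x := by
  cases x with
  | inr u =>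
    show bwdP δ s hdim hδ hs (inf F') = Sum.inr u
    rw [bwdP_inf]
  | inl z =>
    obtain ⟨w, hw⟩ := z
    induction w using Sym2.ind with
    | _ a c =>
      have hac : a ≠ c := by rwa [Sym2.mk_isDiag_iff] at hw
      have hfwd : fwd σ δ s hs hσδ (Sum.inl ⟨s(a, c), hw⟩) = hmap σ δ s a c := by
        show Sym2.lift _ s(a, c) = _
        rw [Sym2.lift_mk]
      rw [hfwd]
      by_cases ha : a = inf F <;> by_cases hc : c = inf F
      · exact absurd (ha.trans hc.symm) hac
      · subst ha
        rw [show hmap σ δ s (inf F) c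
            = Quot.mk _ (pt (algebraMap F F' (coord c))) from by
          conv_lhs => rw [eq_pt_coord hc]
          exact hmap_inf_pt σ δ s (coord c)]
        show bwdP δ s hdim hδ hs (pt (algebraMap F F' (coord c))) = _
        rw [bwdP_pt_rat δ s hdim hδ hs (coord c) (pair_ne_rat _)]
        refine congrArg Sum.inl (Subtype.ext ?_)
        dsimp only
        conv_rhs => rw [eq_pt_coord hc]
      · subst hc
        rw [show hmap σ δ s a (inf F)
            = Quot.mk _ (pt (algebraMap F F' (coord a))) from by
          conv_lhs => rw [eq_pt_coord ha]
          exact hmap_pt_inf σ δ s (coord a)]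
        show bwdP δ s hdim hδ hs (pt (algebraMap F F' (coord a))) = _
        rw [bwdP_pt_rat δ s hdim hδ hs (coord a) (pair_ne_rat _)]
        refine congrArg Sum.inl (Subtype.ext ?_)
        dsimp only
        conv_rhs => rw [eq_pt_coord ha]
        exact Sym2.eq_swap
      · have hne : coord a ≠ coord c := by
          intro h
          apply hac
          rw [eq_pt_coord ha, eq_pt_coord hc, h]
        rw [show hmap σ δ s a c = jmap σ δ s (coord a) (coord c) from by
          conv_lhs => rw [eq_pt_coord ha, eq_pt_coord hc]
          exact hmap_pt_pt σ δ s _ _]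
        show bwdP δ s hdim hδ hs
          (pt (algebraMap F F' (coord a)
            + algebraMap F F' ((coord c - coord a) / s) * δ)) = _
        have hv : (coord c - coord a) / s ≠ 0 :=
          div_ne_zero (sub_ne_zero.mpr (Ne.symm hne)) hs
        rw [bwdP_pt_irr δ s hdim hδ hs (coord a) _ hv (pair_ne s hs hv _)]
        refine congrArg Sum.inl (Subtype.ext ?_)
        dsimp only
        have e : coord a + (coord c - coord a) / s * s = coord c := by
          field_simp
          ring
        rw [e]
        conv_rhs => rw [eq_pt_coord ha, eq_pt_coord hc]

lemma right_inv_aux (y : YbarSet σ) :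
    fwd σ δ s hs hσδ (bwd σ δ s hdim hδ hs hσδ y) = y := by
  induction y using Quot.ind with
  | _ a =>
    show fwd σ δ s hs hσδ (bwdP δ s hdim hδ hs a) = Quot.mk _ a
    by_cases ha : a = inf F'
    · subst ha
      rw [bwdP_inf]
      rfl
    · have haz : a = pt (coord a) := eq_pt_coord ha
      obtain ⟨⟨u, v⟩, hz⟩ := gen hdim hδ (coord a)
      dsimp only at hz
      by_cases hv : v = 0
      · have hzu : coord a = algebraMap F F' u := by rw [hz, hv]; simp
        rw [show a = pt (algebraMap F F' u) from by rw [haz, hzu]]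
        rw [bwdP_pt_rat δ s hdim hδ hs u (pair_ne_rat _)]
        show Sym2.lift _ s(inf F, pt u) = _
        rw [Sym2.lift_mk]
        show hmap σ δ s (inf F) (pt u) = _
        rw [hmap_inf_pt]
      · rw [show a = pt (algebraMap F F' u + algebraMap F F' v * δ) from by
          rw [haz, hz]]
        rw [bwdP_pt_irr δ s hdim hδ hs u v hv (pair_ne s hs hv u)]
        show Sym2.lift _ s(pt u, pt (u + v * s)) = _
        rw [Sym2.lift_mk]
        show hmap σ δ s (pt u) (pt (u + v * s)) = _
        rw [hmap_pt_pt]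
        show Quot.mk _ (pt (algebraMap F F' u
          + algebraMap F F' ((u + v * s - u) / s) * δ)) = _
        have e : (u + v * s - u) / s = v := by field_simp; ring
        rw [e]

end Inv

section Act

variable {F' : Type*} [Field F'] [Algebra F F']

lemma actXbar_mul (g h : GL (Fin 2) F) (x : XbarSet F) :
    actXbar (g * h) x = actXbar g (actXbar h x) := by
  cases x with
  | inr u => rfl
  | inl z =>
    obtain ⟨w, hw⟩ := z
    refine congrArg Sum.inl (Subtype.ext ?_)
    show Sym2.map ((g * h) • ·) w = Sym2.map (g • ·) (Sym2.map (h • ·) w)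
    rw [Sym2.map_map]
    congr 1
    funext a
    exact mul_smul g h a

lemma actXbar_one (x : XbarSet F) : actXbar (1 : GL (Fin 2) F) x = x := by
  cases x with
  | inr u => rfl
  | inl z =>
    obtain ⟨w, hw⟩ := z
    refine congrArg Sum.inl (Subtype.ext ?_)
    show Sym2.map ((1 : GL (Fin 2) F) • ·) w = w
    have : ((1 : GL (Fin 2) F) • · : P1 F → P1 F) = id := funext fun a => one_smul _ a
    rw [this, Sym2.map_id, id_eq]

lemma actYbar_mk (σ : F' ≃ₐ[F] F') (g : GL (Fin 2) F) (y : P1 F') :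
    actYbar σ g (Quot.mk _ y) = Quot.mk _ (glMap F F' g • y) := rfl

lemma actYbar_mul (σ : F' ≃ₐ[F] F') (g h : GL (Fin 2) F) (x : YbarSet σ) :
    actYbar σ (g * h) x = actYbar σ g (actYbar σ h x) := by
  induction x using Quot.ind with
  | _ y =>
    rw [actYbar_mk, actYbar_mk, actYbar_mk, _root_.map_mul, mul_smul]

lemma actYbar_one (σ : F' ≃ₐ[F] F') (x : YbarSet σ) : actYbar σ (1 : GL (Fin 2) F) x = x := by
  induction x using Quot.ind with
  | _ y =>
    rw [actYbar_mk, _root_.map_one, one_smul]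

end Act

section Equiv

variable (σ : F' ≃ₐ[F] F') (δ : F') (s : F)
variable (hs : s ≠ 0) (hσδ : σ δ = algebraMap F F' s - δ)

lemma glMap_inf {b : GL (Fin 2) F} (hb : b • inf F = inf F) :
    glMap F F' b • inf F' = inf F' := by
  obtain ⟨h10, h00, _⟩ := stab_entries hb
  refine smul_inf _ ?_ ?_
  · rw [glMap_coe_apply, h10, _root_.map_zero]
  · rw [glMap_coe_apply]
    simpa [map_eq_zero_iff _ alg_inj] using h00

lemma hmap_equiv (hs : s ≠ 0) (b : GL (Fin 2) F) (hb : b • inf F = inf F) (x y : P1 F) :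
    hmap σ δ s (b • x) (b • y) = actYbar σ b (hmap σ δ s x y) := by
  obtain ⟨h10, h00, h11⟩ := stab_entries hb
  have hg10 : (glMap F F' b : Matrix (Fin 2) (Fin 2) F') 1 0 = 0 := by
    rw [glMap_coe_apply, h10, _root_.map_zero]
  have hg11 : (glMap F F' b : Matrix (Fin 2) (Fin 2) F') 1 1 ≠ 0 := by
    rw [glMap_coe_apply]
    simpa [map_eq_zero_iff _ alg_inj] using h11
  have hM11 : algebraMap F F' ((b : Matrix (Fin 2) (Fin 2) F) 1 1) ≠ 0 := by
    simpa [map_eq_zero_iff _ alg_inj] using h11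
  have hs' : algebraMap F F' s ≠ 0 := by
    simpa [map_eq_zero_iff _ alg_inj] using hs
  have hbpt : ∀ w : F, b • pt w = pt (((b : Matrix (Fin 2) (Fin 2) F) 0 0 * w
      + (b : Matrix (Fin 2) (Fin 2) F) 0 1) / (b : Matrix (Fin 2) (Fin 2) F) 1 1) :=
    smul_pt b h10 h11
  have hbpt' : ∀ z : F', glMap F F' b • pt z
      = pt ((algebraMap F F' ((b : Matrix (Fin 2) (Fin 2) F) 0 0) * z
        + algebraMap F F' ((b : Matrix (Fin 2) (Fin 2) F) 0 1))
          / algebraMap F F' ((b : Matrix (Fin 2) (Fin 2) F) 1 1)) := by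
    intro z
    rw [smul_pt _ hg10 hg11 z, glMap_coe_apply, glMap_coe_apply, glMap_coe_apply]
  by_cases hx : x = inf F <;> by_cases hy : y = inf F
  · rw [hx, hy, hb, hmap_inf_inf, actYbar_mk, glMap_inf hb]
  · rw [hx, hb, eq_pt_coord hy, hbpt, hmap_inf_pt, hmap_inf_pt, actYbar_mk, hbpt']
    have e : algebraMap F F' (((b : Matrix (Fin 2) (Fin 2) F) 0 0 * coord y
        + (b : Matrix (Fin 2) (Fin 2) F) 0 1) / (b : Matrix (Fin 2) (Fin 2) F) 1 1)
        = (algebraMap F F' ((b : Matrix (Fin 2) (Fin 2) F) 0 0)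
            * algebraMap F F' (coord y)
          + algebraMap F F' ((b : Matrix (Fin 2) (Fin 2) F) 0 1))
          / algebraMap F F' ((b : Matrix (Fin 2) (Fin 2) F) 1 1) := by
      rw [_root_.map_div₀, _root_.map_add, _root_.map_mul]
    rw [e]
  · rw [hy, hb, eq_pt_coord hx, hbpt, hmap_pt_inf, hmap_pt_inf, actYbar_mk, hbpt']
    have e : algebraMap F F' (((b : Matrix (Fin 2) (Fin 2) F) 0 0 * coord x
        + (b : Matrix (Fin 2) (Fin 2) F) 0 1) / (b : Matrix (Fin 2) (Fin 2) F) 1 1)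
        = (algebraMap F F' ((b : Matrix (Fin 2) (Fin 2) F) 0 0)
            * algebraMap F F' (coord x)
          + algebraMap F F' ((b : Matrix (Fin 2) (Fin 2) F) 0 1))
          / algebraMap F F' ((b : Matrix (Fin 2) (Fin 2) F) 1 1) := by
      rw [_root_.map_div₀, _root_.map_add, _root_.map_mul]
    rw [e]
  · rw [eq_pt_coord hx, eq_pt_coord hy, hbpt, hbpt, hmap_pt_pt, hmap_pt_pt]
    unfold jmap
    rw [actYbar_mk, hbpt']
    have e : algebraMap F F' (((b : Matrix (Fin 2) (Fin 2) F) 0 0 * coord x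
          + (b : Matrix (Fin 2) (Fin 2) F) 0 1) / (b : Matrix (Fin 2) (Fin 2) F) 1 1)
        + algebraMap F F' ((((b : Matrix (Fin 2) (Fin 2) F) 0 0 * coord y
            + (b : Matrix (Fin 2) (Fin 2) F) 0 1) / (b : Matrix (Fin 2) (Fin 2) F) 1 1
          - ((b : Matrix (Fin 2) (Fin 2) F) 0 0 * coord x
            + (b : Matrix (Fin 2) (Fin 2) F) 0 1)
              / (b : Matrix (Fin 2) (Fin 2) F) 1 1) / s) * δ
        = (algebraMap F F' ((b : Matrix (Fin 2) (Fin 2) F) 0 0)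
            * (algebraMap F F' (coord x)
              + algebraMap F F' ((coord y - coord x) / s) * δ)
          + algebraMap F F' ((b : Matrix (Fin 2) (Fin 2) F) 0 1))
          / algebraMap F F' ((b : Matrix (Fin 2) (Fin 2) F) 1 1) := by
      simp only [_root_.map_div₀, _root_.map_add, _root_.map_sub, _root_.map_mul]
      field_simp
      ring
    rw [e]

lemma fwd_equiv (b : GL (Fin 2) F) (hb : b • inf F = inf F) (x : XbarSet F) :
    fwd σ δ s hs hσδ (actXbar b x) = actYbar σ b (fwd σ δ s hs hσδ x) := by
  cases x with
  | inr u =>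
    show Quot.mk _ (inf F') = actYbar σ b (Quot.mk _ (inf F'))
    rw [actYbar_mk, glMap_inf hb]
  | inl z =>
    obtain ⟨w, hw⟩ := z
    induction w using Sym2.ind with
    | _ x y =>
      show Sym2.lift _ (Sym2.map (b • ·) s(x, y)) = actYbar σ b (Sym2.lift _ s(x, y))
      rw [Sym2.map_pair_eq, Sym2.lift_mk, Sym2.lift_mk]
      exact hmap_equiv σ δ s hs b hb x y

end Equiv

end S7
/-- The `G`-sets `X̄` (unordered pairs of distinct points of `ℙ¹(F)`, plus a
point) and `Ȳ = ℙ¹(F')/⟨σ⟩` are isomorphic as `B`-sets. -/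
theorem statement7 {F : Type*} [Field F] [Fintype F] {F' : Type*} [Field F'] [Algebra F F']
    (hdim : Module.finrank F F' = 2)
    (σ : F' ≃ₐ[F] F') (hσ : σ ≠ (AlgEquiv.refl : F' ≃ₐ[F] F'))
    (xoo : P1 F) :
    ∃ f : XbarSet F ≃ YbarSet σ,
      ∀ b ∈ Bsub F xoo, ∀ x, f (actXbar b x) = actYbar σ b (f x) := by
  obtain ⟨δ, s, hδ, hs, hσδ⟩ := S7.exists_delta hdim hσ
  obtain ⟨g₀, hg₀⟩ := S7.exists_transitive (K := F) xoo
  let f₀ : XbarSet F ≃ YbarSet σ :=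
    { toFun := S7.fwd σ δ s hs hσδ
      invFun := S7.bwd σ δ s hdim hδ hs hσδ
      left_inv := S7.left_inv_aux σ δ s hdim hδ hs hσδ
      right_inv := S7.right_inv_aux σ δ s hdim hδ hs hσδ }
  have hf₀ : ∀ b : GL (Fin 2) F, b • S7.inf F = S7.inf F → ∀ x,
      f₀ (actXbar b x) = actYbar σ b (f₀ x) :=
    fun b hb x => S7.fwd_equiv σ δ s hs hσδ b hb x
  refine ⟨{ toFun := fun x => actYbar σ g₀ (f₀ (actXbar g₀⁻¹ x))
            invFun := fun y => actXbar g₀ (f₀.symm (actYbar σ g₀⁻¹ y))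
            left_inv := ?_
            right_inv := ?_ }, ?_⟩
  · intro x
    dsimp only
    rw [← S7.actYbar_mul, inv_mul_cancel, S7.actYbar_one, Equiv.symm_apply_apply,
      ← S7.actXbar_mul, mul_inv_cancel, S7.actXbar_one]
  · intro y
    dsimp only
    rw [← S7.actXbar_mul, inv_mul_cancel, S7.actXbar_one, Equiv.apply_symm_apply,
      ← S7.actYbar_mul, mul_inv_cancel, S7.actYbar_one]
  · intro b hb x
    dsimp only [Equiv.coe_fn_mk]
    have hbx : b • xoo = xoo := hb
    have hmem : (g₀⁻¹ * b * g₀) • S7.inf F = S7.inf F := by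
      rw [mul_smul, mul_smul, hg₀, hbx, ← hg₀, inv_smul_smul]
    rw [← S7.actXbar_mul, show g₀⁻¹ * b = g₀⁻¹ * b * g₀ * g₀⁻¹ by group,
      S7.actXbar_mul, hf₀ _ hmem, ← S7.actYbar_mul,
      show g₀ * (g₀⁻¹ * b * g₀) = b * g₀ by group, S7.actYbar_mul]

end
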